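/- Every rank-one matrix T ∈ Mₙ(ℂ) is unitarily equivalent to a complex symmetric matrix. -/

import Mathlib

open scoped ComplexConjugate
open Matrix

/-- Paper-convention inner product on ℂⁿ: ⟨x,y⟩ = ∑ xᵢ conj(yᵢ). -/
noncomputable def cinner {n : ℕ} (x y : Fin n → ℂ) : ℂ := ∑ i, x i * conj (y i)

/-- A conjugation on ℂⁿ: a conjugate-linear isometric involution. -/
structure Conjugation (n : ℕ) where
  toFun : (Fin n → ℂ) → (Fin n → ℂ)
  map_add : ∀ x y, toFun (x + y) = toFun x + toFun y
  map_smul : ∀ (a : ℂ) (x), toFun (a • x) = conj a • toFun x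
  isometric : ∀ x y, cinner (toFun x) (toFun y) = cinner y x
  involutive : ∀ x, toFun (toFun x) = x

/-- `T` is unitarily equivalent to a complex symmetric matrix. -/
def UECSM {n : ℕ} (T : Matrix (Fin n) (Fin n) ℂ) : Prop :=
  ∃ Q ∈ Matrix.unitaryGroup (Fin n) ℂ, (Qᴴ * T * Q)ᵀ = Qᴴ * T * Q

open scoped InnerProductSpace

lemma rank_one_decomp {n : ℕ} (T : Matrix (Fin n) (Fin n) ℂ) (hT : T.rank = 1) :
    ∃ x y : Fin n → ℂ, x ≠ 0 ∧ y ≠ 0 ∧ ∀ i j, T i j = x i * conj (y j) := by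
  rw [Matrix.rank, finrank_eq_one_iff'] at hT
  obtain ⟨v, hv0, hv⟩ := hT
  have hcol : ∀ j : Fin n, ∃ c : ℂ, c • (v : Fin n → ℂ) = fun i => T i j := by
    intro j
    have hmem : (fun i => T i j) ∈ LinearMap.range T.mulVecLin := by
      refine ⟨Pi.single j 1, ?_⟩
      ext i
      simp [Matrix.mulVecLin_apply, Matrix.mulVec_single]
    obtain ⟨c, hc⟩ := hv ⟨_, hmem⟩
    exact ⟨c, congrArg Subtype.val hc⟩
  choose c hc using hcol
  refine ⟨v, fun j => conj (c j), ?_, ?_, ?_⟩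
  · exact fun h => hv0 (Subtype.ext h)
  · intro h
    apply hv0
    have hT0 : ∀ i j, T i j = 0 := by
      intro i j
      have hcj : c j = 0 := by
        have := congrFun h j
        simpa using this
      have := congrFun (hc j) i
      simp [hcj] at this
      exact this.symm
    have : ∀ w ∈ LinearMap.range T.mulVecLin, w = 0 := by
      rintro w ⟨u, rfl⟩
      ext i
      simp [Matrix.mulVecLin_apply, Matrix.mulVec, dotProduct, hT0]
    have hv' := v.2
    ext1
    exact this v hv'
  · intro i j
    have := congrFun (hc j) i
    simp only [Pi.smul_apply, smul_eq_mul] at this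
    rw [← this, Complex.conj_conj]
    ring

lemma uecsm_small {n : ℕ} (hn : n ≤ 1) (T : Matrix (Fin n) (Fin n) ℂ) : UECSM T := by
  refine ⟨1, one_mem _, ?_⟩
  have : ∀ i j : Fin n, i = j := by
    intro i j
    have hi := i.isLt; have hj := j.isLt
    exact Fin.ext (by omega)
  ext i j
  rw [this i j, Matrix.transpose_apply]

lemma onb_unitary {n : ℕ} (b : OrthonormalBasis (Fin n) ℂ (EuclideanSpace ℂ (Fin n))) :
    (Matrix.of fun i j => b j i) ∈ Matrix.unitaryGroup (Fin n) ℂ := by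
  rw [Matrix.mem_unitaryGroup_iff']
  ext i j
  have h := (orthonormal_iff_ite.mp b.orthonormal) i j
  rw [PiLp.inner_apply] at h
  simp only [RCLike.inner_apply, starRingEnd_apply] at h
  simp only [Matrix.mul_apply, Matrix.star_apply, Matrix.of_apply, Matrix.one_apply]
  rw [← h]; exact Finset.sum_congr rfl fun _ _ => mul_comm _ _

lemma uecsm_of_decomp_aux {n : ℕ} (T : Matrix (Fin n) (Fin n) ℂ) (x y : Fin n → ℂ)
    (hT : ∀ i j, T i j = x i * conj (y j))
    (b : OrthonormalBasis (Fin n) ℂ (EuclideanSpace ℂ (Fin n))) (lam : ℂ)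
    (hb : ∀ i, ⟪b i, (WithLp.toLp 2 x : EuclideanSpace ℂ (Fin n))⟫_ℂ
        = lam * conj ⟪b i, (WithLp.toLp 2 y : EuclideanSpace ℂ (Fin n))⟫_ℂ) :
    UECSM T := by
  refine ⟨Matrix.of fun i j => b j i, onb_unitary b, ?_⟩
  have inner_x : ∀ i, ⟪b i, (WithLp.toLp 2 x : EuclideanSpace ℂ (Fin n))⟫_ℂ = ∑ k, conj (b i k) * x k := by
    intro i; rw [PiLp.inner_apply]; simp [RCLike.inner_apply]
    exact Finset.sum_congr rfl fun _ _ => mul_comm _ _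
  have inner_y : ∀ i, ⟪b i, (WithLp.toLp 2 y : EuclideanSpace ℂ (Fin n))⟫_ℂ = ∑ k, conj (b i k) * y k := by
    intro i; rw [PiLp.inner_apply]; simp [RCLike.inner_apply]
    exact Finset.sum_congr rfl fun _ _ => mul_comm _ _
  have key : ∀ i j, ((Matrix.of fun i j : Fin n => b j i)ᴴ * T * (Matrix.of fun i j : Fin n => b j i)) i j
      = lam * conj (∑ k, conj (b i k) * y k) * conj (∑ l, conj (b j l) * y l) := by
    intro i j
    have expand : ((Matrix.of fun i j : Fin n => b j i)ᴴ * T * (Matrix.of fun i j : Fin n => b j i)) i j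
        = (∑ k, conj (b i k) * x k) * conj (∑ l, conj (b j l) * y l) := by
      simp only [Matrix.mul_apply, Matrix.conjTranspose_apply, Matrix.of_apply, hT,
        map_sum, Finset.sum_mul, Finset.mul_sum, ← starRingEnd_apply]
      refine Finset.sum_congr rfl fun l _ => Finset.sum_congr rfl fun k _ => ?_
      simp only [starRingEnd_apply, star_mul', star_star]
      ring
    rw [expand, ← inner_x, hb i, inner_y]
  ext i j
  rw [Matrix.transpose_apply, key, key]
  ring

set_option maxHeartbeats 1600000 in
lemma exists_onb_lam {n : ℕ} (hn : 2 ≤ n) (x y : EuclideanSpace ℂ (Fin n))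
    (hx : x ≠ 0) (hy : y ≠ 0) :
    ∃ (b : OrthonormalBasis (Fin n) ℂ (EuclideanSpace ℂ (Fin n))) (lam : ℂ),
      ∀ i, ⟪b i, x⟫_ℂ = lam * conj ⟪b i, y⟫_ℂ := by
  obtain ⟨m, rfl⟩ : ∃ m, n = m + 2 := ⟨n - 2, by omega⟩
  have hxn : (‖x‖ : ℂ) ≠ 0 := by
    simp only [ne_eq, Complex.ofReal_eq_zero, norm_eq_zero]; exact hx
  by_cases hdep : ∃ μ : ℂ, y = μ • x
  · obtain ⟨μ, rfl⟩ := hdep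
    have hμ : μ ≠ 0 := by rintro rfl; simp at hy
    set u : EuclideanSpace ℂ (Fin (m+2)) := ((‖x‖ : ℂ))⁻¹ • x with hu_def
    have hun : ‖u‖ = 1 := by
      rw [hu_def, norm_smul, norm_inv, Complex.norm_real, Real.norm_eq_abs,
        abs_of_nonneg (norm_nonneg x), inv_mul_cancel₀ (norm_ne_zero_iff.mpr hx)]
    have huu : ⟪u, u⟫_ℂ = 1 := by
      rw [inner_self_eq_norm_sq_to_K, hun]; norm_num
    have hxu : x = (‖x‖ : ℂ) • u := by
      rw [hu_def, smul_smul, mul_inv_cancel₀ hxn, one_smul]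
    have hon : Orthonormal ℂ (Set.restrict {(0 : Fin (m+2))} (fun _ => u)) := by
      rw [orthonormal_iff_ite]
      rintro ⟨i, hi⟩ ⟨j, hj⟩
      simp only [Set.mem_singleton_iff] at hi hj
      subst hi; subst hj
      rw [if_pos rfl]; exact huu
    obtain ⟨b, hb⟩ := hon.exists_orthonormalBasis_extension_of_card_eq
      (by simp)
    have hb0 : b 0 = u := hb 0 rfl
    refine ⟨b, (conj μ)⁻¹, fun i => ?_⟩
    by_cases hi : i = 0
    · subst hi
      have hux : ⟪u, x⟫_ℂ = (‖x‖ : ℂ) := by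
        conv_lhs => rw [hxu]
        rw [inner_smul_right, huu, mul_one]
      have huy : ⟪u, μ • x⟫_ℂ = μ * ‖x‖ := by rw [inner_smul_right, hux]
      rw [hb0, hux, huy]
      simp only [_root_.map_mul, Complex.conj_ofReal]
      have hcm : (starRingEnd ℂ) μ ≠ 0 := by simpa using hμ
      field_simp
    · have hbi : ⟪b i, u⟫_ℂ = 0 := by
        rw [← hb0]
        have := (orthonormal_iff_ite.mp b.orthonormal) i 0
        simpa [hi] using this
      have hix : ⟪b i, x⟫_ℂ = 0 := by
        conv_lhs => rw [hxu]
        rw [inner_smul_right, hbi, mul_zero]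
      have hiy : ⟪b i, μ • x⟫_ℂ = 0 := by rw [inner_smul_right, hix, mul_zero]
      rw [hix, hiy]
      simp
  · push_neg at hdep
    have hxnorm : ‖x‖ ≠ 0 := norm_ne_zero_iff.mpr hx
    obtain ⟨u₀, hu₀_def⟩ : ∃ u₀ : EuclideanSpace ℂ (Fin (m+2)), u₀ = ((‖x‖ : ℂ))⁻¹ • x := ⟨_, rfl⟩
    have hxu₀ : x = (‖x‖ : ℂ) • u₀ := by
      rw [hu₀_def, smul_smul, mul_inv_cancel₀ hxn, one_smul]
    set h₀ : ℂ := ⟪u₀, y⟫_ℂ with hh₀_def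
    obtain ⟨c, hc_def⟩ : ∃ c : ℂ, c = if h₀ = 0 then 1 else h₀ / ‖h₀‖ := ⟨_, rfl⟩
    have hc1 : ‖c‖ = 1 := by
      rw [hc_def]; split_ifs with h
      · simp
      · rw [norm_div, Complex.norm_real, Real.norm_eq_abs, abs_of_nonneg (norm_nonneg _),
          div_self (norm_ne_zero_iff.mpr h)]
    have hcc : conj c * c = 1 := by
      rw [mul_comm, Complex.mul_conj, Complex.normSq_eq_norm_sq, hc1]; norm_num
    have hc0 : c ≠ 0 := by
      intro h; rw [h] at hc1; simp at hc1
    obtain ⟨u, hu_def⟩ : ∃ u : EuclideanSpace ℂ (Fin (m+2)), u = c • u₀ := ⟨_, rfl⟩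
    have hun : ‖u‖ = 1 := by
      rw [hu_def, norm_smul, hu₀_def, norm_smul, norm_inv, Complex.norm_real,
        Real.norm_eq_abs, abs_of_nonneg (norm_nonneg x),
        inv_mul_cancel₀ hxnorm, mul_one, hc1]
    have huu : ⟪u, u⟫_ℂ = 1 := by
      rw [inner_self_eq_norm_sq_to_K, hun]; norm_num
    set H : ℝ := ‖h₀‖ with hH_def
    have hH : ⟪u, y⟫_ℂ = (H : ℂ) := by
      rw [hu_def, inner_smul_left, ← hh₀_def, hc_def]
      split_ifs with h
      · simp [h, hH_def]
      · rw [map_div₀, Complex.conj_ofReal, div_mul_eq_mul_div, mul_comm, Complex.mul_conj,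
          Complex.normSq_eq_norm_sq, hH_def]
        rw [sq]
        rw [Complex.ofReal_mul]
        rw [mul_div_assoc, div_self (by simpa using norm_ne_zero_iff.mpr h), mul_one]
    obtain ⟨z, hz_def⟩ : ∃ z : EuclideanSpace ℂ (Fin (m+2)), z = y - (H : ℂ) • u := ⟨_, rfl⟩
    have hz0 : z ≠ 0 := by
      intro h
      apply hdep ((H : ℂ) * (c * (‖x‖ : ℂ)⁻¹))
      have hy' : y = (H : ℂ) • u := by
        have h2 : y - (H : ℂ) • u = 0 := hz_def.symm.trans h
        rw [sub_eq_zero] at h2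
        exact h2
      rw [hy', hu_def, hu₀_def, smul_smul, smul_smul, mul_assoc]
    set R : ℝ := ‖z‖ with hR_def
    have hR : 0 < R := norm_pos_iff.mpr hz0
    have hRc : (R : ℂ) ≠ 0 := by simpa using hR.ne'
    obtain ⟨e, he_def⟩ : ∃ e : EuclideanSpace ℂ (Fin (m+2)), e = ((R : ℂ))⁻¹ • z := ⟨_, rfl⟩
    have hze : z = (R : ℂ) • e := by
      rw [he_def, smul_smul, mul_inv_cancel₀ hRc, one_smul]
    have hen : ‖e‖ = 1 := by
      rw [he_def, norm_smul, norm_inv, Complex.norm_real, Real.norm_eq_abs,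
        abs_of_nonneg (norm_nonneg z), ← hR_def, inv_mul_cancel₀ hR.ne']
    have hee : ⟪e, e⟫_ℂ = 1 := by
      rw [inner_self_eq_norm_sq_to_K, hen]; norm_num
    have huz : ⟪u, z⟫_ℂ = 0 := by
      rw [hz_def, inner_sub_right, inner_smul_right, hH, huu, mul_one, sub_self]
    have hue : ⟪u, e⟫_ℂ = 0 := by
      rw [he_def, inner_smul_right, huz, mul_zero]
    have heu : ⟪e, u⟫_ℂ = 0 := inner_eq_zero_symm.mp hue
    have hyd : y = (H : ℂ) • u + (R : ℂ) • e := by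
      rw [← hze, hz_def]; abel
    set S : ℂ := (‖x‖ : ℂ) * conj c with hS_def
    have hS0 : S ≠ 0 := by
      apply mul_ne_zero hxn
      simpa using hc0
    have hxu : x = S • u := by
      rw [hS_def, hu_def, smul_smul, mul_assoc, hcc, mul_one, ← hxu₀]
    set K : ℝ := Real.sqrt (R ^ 2 + H ^ 2) with hK_def
    have hKpos : 0 < K := Real.sqrt_pos.mpr (by positivity)
    have hK2r : K ^ 2 = R ^ 2 + H ^ 2 := Real.sq_sqrt (by positivity)
    have hK2 : (K : ℂ) ^ 2 = (R : ℂ) ^ 2 + (H : ℂ) ^ 2 := by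
      rw [← Complex.ofReal_pow, hK2r]; push_cast; ring
    have hKc : (K : ℂ) ≠ 0 := by simpa using hKpos.ne'
    set D : ℝ := Real.sqrt 2 * K with hD_def
    have hDpos : 0 < D := mul_pos (Real.sqrt_pos.mpr two_pos) hKpos
    have hD2r : D ^ 2 = 2 * K ^ 2 := by
      rw [hD_def, mul_pow, Real.sq_sqrt (by norm_num : (0:ℝ) ≤ 2)]
    have hD2 : (D : ℂ) ^ 2 = 2 * (K : ℂ) ^ 2 := by
      rw [← Complex.ofReal_pow, hD2r]; push_cast; ring
    have hDc : (D : ℂ) ≠ 0 := by simpa using hDpos.ne'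
    set α : ℂ := (R : ℂ) / (D : ℂ) with hα_def
    set β : ℂ := (Complex.I * (K : ℂ) - (H : ℂ)) / (D : ℂ) with hβ_def
    have hcα : conj α = α := by
      rw [hα_def, map_div₀, Complex.conj_ofReal, Complex.conj_ofReal]
    have hcβ : conj β = (-(Complex.I * (K : ℂ)) - (H : ℂ)) / (D : ℂ) := by
      rw [hβ_def, map_div₀, map_sub, _root_.map_mul, Complex.conj_I, Complex.conj_ofReal,
        Complex.conj_ofReal, Complex.conj_ofReal]
      ring
    have hN : conj α * α + conj β * β = 1 := by
      rw [hcα, hcβ, hα_def, hβ_def]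
      field_simp
      linear_combination -hK2 - hD2 - (K:ℂ)^2 * Complex.I_sq
    obtain ⟨c₀, hc₀_def⟩ : ∃ c₀ : EuclideanSpace ℂ (Fin (m+2)), c₀ = α • u + β • e := ⟨_, rfl⟩
    obtain ⟨c₁, hc₁_def⟩ : ∃ c₁ : EuclideanSpace ℂ (Fin (m+2)), c₁ = (-conj β) • u + conj α • e := ⟨_, rfl⟩
    have i00 : ⟪c₀, c₀⟫_ℂ = 1 := by
      rw [hc₀_def]
      simp only [inner_add_left, inner_add_right, inner_smul_left, inner_smul_right,
        huu, hue, heu, hee, mul_one, mul_zero, add_zero, zero_add]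
      linear_combination hN
    have i01 : ⟪c₀, c₁⟫_ℂ = 0 := by
      rw [hc₀_def, hc₁_def]
      simp only [inner_add_left, inner_add_right, inner_smul_left, inner_smul_right,
        huu, hue, heu, hee, mul_one, mul_zero, add_zero, zero_add]
      ring
    have i10 : ⟪c₁, c₀⟫_ℂ = 0 := by
      rw [hc₀_def, hc₁_def]
      simp only [inner_add_left, inner_add_right, inner_smul_left, inner_smul_right,
        huu, hue, heu, hee, mul_one, mul_zero, add_zero, zero_add, map_neg, Complex.conj_conj]
      ring
    have i11 : ⟪c₁, c₁⟫_ℂ = 1 := by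
      rw [hc₁_def]
      simp only [inner_add_left, inner_add_right, inner_smul_left, inner_smul_right,
        huu, hue, heu, hee, mul_one, mul_zero, add_zero, zero_add, map_neg, Complex.conj_conj]
      linear_combination hN
    have h01 : (0 : Fin (m+2)) ≠ 1 := by simp [Fin.ext_iff]
    have hon : Orthonormal ℂ (Set.restrict {(0 : Fin (m+2)), 1}
        (fun i => if i = 0 then c₀ else c₁)) := by
      rw [orthonormal_iff_ite]
      rintro ⟨i, hi⟩ ⟨j, hj⟩
      simp only [Set.mem_insert_iff, Set.mem_singleton_iff] at hi hj
      rcases hi with rfl | rfl <;> rcases hj with rfl | rfl <;>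
        simp [Set.restrict, Subtype.ext_iff, h01, h01.symm, i00, i01, i10, i11] <;>
        first | simpa using i00 | simpa using i11
    obtain ⟨b, hb⟩ := hon.exists_orthonormalBasis_extension_of_card_eq (by simp)
    have hb0 : b 0 = c₀ := by
      have := hb 0 (by simp)
      simpa using this
    have hb1 : b 1 = c₁ := by
      have := hb 1 (by simp)
      simpa [h01.symm] using this
    have hu_span : u = conj α • c₀ - β • c₁ := by
      have expand : conj α • c₀ - β • c₁
          = (conj α * α + β * conj β) • u + (conj α * β - β * conj α) • e := by
        rw [hc₀_def, hc₁_def]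
        simp only [smul_add, smul_smul, smul_neg, neg_smul]
        module
      rw [expand, (by linear_combination hN : conj α * α + β * conj β = 1),
        (by ring : conj α * β - β * conj α = 0), one_smul, zero_smul, add_zero]
    have he_span : e = conj β • c₀ + α • c₁ := by
      have expand : conj β • c₀ + α • c₁
          = (conj β * α - α * conj β) • u + (conj β * β + α * conj α) • e := by
        rw [hc₀_def, hc₁_def]
        simp only [smul_add, smul_smul, smul_neg, neg_smul]
        module
      rw [expand, (by linear_combination hN : conj β * β + α * conj α = 1),
        (by ring : conj β * α - α * conj β = 0), one_smul, zero_smul, zero_add]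
    have hIK : Complex.I * (K : ℂ) ≠ 0 := mul_ne_zero Complex.I_ne_zero hKc
    have hdiv : ∀ w v : ℂ, w * (Complex.I * (K : ℂ)) = v
        → S * w = S / (Complex.I * (K : ℂ)) * v := by
      intro w v hwv
      rw [← hwv]
      field_simp
    refine ⟨b, S / (Complex.I * (K : ℂ)), fun i => ?_⟩
    by_cases hi0 : i = 0
    · subst hi0
      have hAx : ⟪b 0, x⟫_ℂ = S * conj α := by
        rw [hb0]
        conv_lhs => rw [hxu]
        rw [inner_smul_right, hc₀_def]
        simp only [inner_add_left, inner_smul_left, huu, heu, mul_one, mul_zero, add_zero]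
      have hAy : ⟪b 0, y⟫_ℂ = conj α * (H : ℂ) + conj β * (R : ℂ) := by
        rw [hb0]
        conv_lhs => rw [hyd]
        rw [hc₀_def]
        simp only [inner_add_left, inner_add_right, inner_smul_left, inner_smul_right,
          huu, hue, heu, hee, mul_one, mul_zero, add_zero, zero_add]
        ring
      rw [hAx, hAy]
      simp only [map_add, _root_.map_mul, Complex.conj_conj, Complex.conj_ofReal, hcα]
      refine hdiv _ _ ?_
      rw [hα_def, hβ_def]
      field_simp
      ring
    · by_cases hi1 : i = 1
      · subst hi1
        have hAx : ⟪b 1, x⟫_ℂ = -(S * β) := by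
          rw [hb1]
          conv_lhs => rw [hxu]
          rw [inner_smul_right, hc₁_def]
          simp only [inner_add_left, inner_smul_left, huu, heu, mul_one, mul_zero, add_zero,
            map_neg, Complex.conj_conj]
          ring
        have hAy : ⟪b 1, y⟫_ℂ = -(β * (H : ℂ)) + α * (R : ℂ) := by
          rw [hb1]
          conv_lhs => rw [hyd]
          rw [hc₁_def]
          simp only [inner_add_left, inner_add_right, inner_smul_left, inner_smul_right,
            huu, hue, heu, hee, mul_one, mul_zero, add_zero, zero_add, map_neg, Complex.conj_conj]
          ring
        rw [hAx, hAy]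
        simp only [map_add, map_neg, _root_.map_mul, Complex.conj_conj, Complex.conj_ofReal,
          hcα, hcβ]
        rw [show -(S * β) = S * (-β) by ring]
        refine hdiv _ _ ?_
        rw [hα_def, hβ_def]
        field_simp
        linear_combination hK2 - (K:ℂ)^2*Complex.I_sq
      · have hbc0 : ⟪b i, c₀⟫_ℂ = 0 := by
          rw [← hb0]
          have := (orthonormal_iff_ite.mp b.orthonormal) i 0
          simpa [hi0] using this
        have hbc1 : ⟪b i, c₁⟫_ℂ = 0 := by
          rw [← hb1]
          have := (orthonormal_iff_ite.mp b.orthonormal) i 1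
          simpa [hi1] using this
        have hbu : ⟪b i, u⟫_ℂ = 0 := by
          conv_lhs => rw [hu_span]
          rw [inner_sub_right, inner_smul_right, inner_smul_right, hbc0, hbc1]
          simp
        have hbe : ⟪b i, e⟫_ℂ = 0 := by
          conv_lhs => rw [he_span]
          rw [inner_add_right, inner_smul_right, inner_smul_right, hbc0, hbc1]
          simp
        have hAx : ⟪b i, x⟫_ℂ = 0 := by
          conv_lhs => rw [hxu]
          rw [inner_smul_right, hbu, mul_zero]
        have hAy : ⟪b i, y⟫_ℂ = 0 := by
          conv_lhs => rw [hyd]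
          rw [inner_add_right, inner_smul_right, inner_smul_right, hbu, hbe]
          simp
        rw [hAx, hAy]
        simp

theorem rank_one_uecsm {n : ℕ} (T : Matrix (Fin n) (Fin n) ℂ) (hT : T.rank = 1) :
    UECSM T := by
  by_cases hn : n ≤ 1
  · exact uecsm_small hn T
  · push_neg at hn
    obtain ⟨x, y, hx, hy, hT'⟩ := rank_one_decomp T hT
    obtain ⟨b, lam, hb⟩ := exists_onb_lam hn (WithLp.toLp 2 x) (WithLp.toLp 2 y) (by simpa using hx) (by simpa using hy)
    exact uecsm_of_decomp_aux T x y hT' b lam hb
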